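/- Let d ≥ 1, n ≥ 1, and let x, y : Fin d → ℝ^n be tuples of vectors. Assume that for every u ∈ ℝ^n one has ∏_{j ∈ Fin d} ⟨u, x j⟩ = ∏_{j ∈ Fin d} ⟨u, y j⟩. Then there exists a permutation σ of Fin d such that the rank-one tensors agree: for every multi-index idx : Fin d → Fin n, ∏_{j} (y j)(idx j) = ∏_{j} (x (σ j))(idx j); that is, ⊗_{j} y_j = ⊗_{j} x_{σ(j)} as d-mode tensors on (ℝ^n)^{⊗d}. -/

import Mathlib

open MvPolynomial

noncomputable def Lf (n : ℕ) (v : Fin n → ℝ) : MvPolynomial (Fin n) ℝ :=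
  ∑ k, C (v k) * X k

lemma coeff_Lf (n : ℕ) (v : Fin n → ℝ) (k : Fin n) :
    (Lf n v).coeff (Finsupp.single k 1) = v k := by
  rw [Lf]
  rw [MvPolynomial.coeff_sum]
  have : ∀ j : Fin n, ((C (v j) * X j : MvPolynomial (Fin n) ℝ)).coeff (Finsupp.single k 1)
      = if j = k then v j else 0 := by
    intro j
    rw [coeff_C_mul, coeff_X']
    by_cases h : j = k
    · simp [h]
    · have : ¬ (Finsupp.single j 1 = Finsupp.single k 1) := by
        simp [Finsupp.single_left_inj (one_ne_zero), h]
      simp [this, h]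
  simp_rw [this]
  simp

lemma Lf_eq_zero (n : ℕ) (v : Fin n → ℝ) (h : Lf n v = 0) : v = 0 := by
  funext k
  have := coeff_Lf n v k
  rw [h] at this
  simpa using this.symm

lemma Lf_smul (n : ℕ) (b : ℝ) (v : Fin n → ℝ) : Lf n (b • v) = C b * Lf n v := by
  rw [Lf, Lf, Finset.mul_sum]
  refine Finset.sum_congr rfl fun k _ => ?_
  simp [C_mul, mul_assoc]

lemma eval_Lf (n : ℕ) (v u : Fin n → ℝ) : eval u (Lf n v) = ∑ k, u k * v k := by
  rw [Lf, map_sum]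
  refine Finset.sum_congr rfl fun k _ => ?_
  simp [mul_comm]

lemma aeval_Lf (n : ℕ) (v : Fin n → ℝ) (f : Fin n → MvPolynomial (Fin n) ℝ) :
    aeval f (Lf n v) = ∑ k, C (v k) * f k := by
  rw [Lf, map_sum]
  refine Finset.sum_congr rfl fun k _ => ?_
  simp [algebraMap_eq]

lemma prime_X_real (n : ℕ) (i : Fin n) : Prime (X i : MvPolynomial (Fin n) ℝ) := by
  cases n with
  | zero => exact i.elim0
  | succ m =>
    have h0 : Prime (X 0 : MvPolynomial (Fin (m+1)) ℝ) := by
      rw [← MulEquiv.prime_iff (finSuccEquiv ℝ m).toMulEquiv]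
      have : (finSuccEquiv ℝ m).toMulEquiv (X 0) = Polynomial.X := finSuccEquiv_X_zero
      rw [this]
      exact Polynomial.prime_X
    have := (MulEquiv.prime_iff (renameEquiv ℝ (Equiv.swap (0 : Fin (m+1)) i)).toMulEquiv).mpr h0
    simpa using this

lemma sum_C_mul_ite (n : ℕ) (v : Fin n → ℝ) (k0 : Fin n) (P : MvPolynomial (Fin n) ℝ) :
    (∑ k, C (v k) * (if k = k0 then P else X k)) = Lf n v + C (v k0) * (P - X k0) := by
  have : ∀ k : Fin n, C (v k) * (if k = k0 then P else X k)
      = C (v k) * X k + (if k = k0 then C (v k0) * (P - X k0) else 0) := by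
    intro k
    by_cases h : k = k0
    · subst h; simp; ring
    · simp [h]
  simp_rw [this, Finset.sum_add_distrib]
  rw [Finset.sum_ite_eq' Finset.univ k0 (fun _ => C (v k0) * (P - X k0))]
  simp [Lf]

noncomputable def psi (n : ℕ) (v : Fin n → ℝ) (k0 : Fin n) (hv : v k0 ≠ 0) :
    MvPolynomial (Fin n) ℝ ≃ₐ[ℝ] MvPolynomial (Fin n) ℝ := by
  refine AlgEquiv.ofAlgHom
    (aeval (fun k => if k = k0 then Lf n v else X k))
    (aeval (fun k => if k = k0 then
      C (v k0)⁻¹ * (X k0 - (Lf n v - C (v k0) * X k0)) else X k)) ?_ ?_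
  · apply MvPolynomial.algHom_ext
    intro k
    by_cases h : k = k0
    · subst h
      have hC : (C (v k) : MvPolynomial (Fin n) ℝ) * C (v k)⁻¹ = 1 := by
        rw [← C_mul, mul_inv_cancel₀ hv, C_1]
      simp only [AlgHom.comp_apply, aeval_X, reduceIte, AlgHom.id_apply, map_mul, map_sub,
        aeval_C, aeval_Lf, sum_C_mul_ite, algebraMap_eq]
      linear_combination (X k : MvPolynomial (Fin n) ℝ) * hC
    · simp [h]
  · apply MvPolynomial.algHom_ext
    intro k
    by_cases h : k = k0
    · subst h
      have hC : (C (v k) : MvPolynomial (Fin n) ℝ) * C (v k)⁻¹ = 1 := by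
        rw [← C_mul, mul_inv_cancel₀ hv, C_1]
      simp only [AlgHom.comp_apply, aeval_X, reduceIte, AlgHom.id_apply, map_mul, map_sub,
        aeval_C, aeval_Lf, sum_C_mul_ite, algebraMap_eq]
      linear_combination (X k - Lf n v + C (v k) * X k) * hC
    · simp [h]

lemma psi_X (n : ℕ) (v : Fin n → ℝ) (k0 : Fin n) (hv : v k0 ≠ 0) :
    psi n v k0 hv (X k0) = Lf n v := by
  simp [psi]

lemma prime_Lf (n : ℕ) (v : Fin n → ℝ) (hv : v ≠ 0) : Prime (Lf n v) := by
  obtain ⟨k0, hk0⟩ : ∃ k, v k ≠ 0 := by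
    by_contra h
    push_neg at h
    exact hv (funext h)
  have := (MulEquiv.prime_iff (psi n v k0 hk0).toMulEquiv).mpr (prime_X_real n k0)
  simpa [psi_X n v k0 hk0] using this

lemma Lf_add (n : ℕ) (a b : Fin n → ℝ) : Lf n (a + b) = Lf n a + Lf n b := by
  simp [Lf, ← Finset.sum_add_distrib, add_mul]

lemma Lf_sub (n : ℕ) (a b : Fin n → ℝ) : Lf n (a - b) = Lf n a - Lf n b := by
  simp [Lf, ← Finset.sum_sub_distrib, sub_mul]

lemma Lf_single (n : ℕ) (k0 : Fin n) : Lf n (fun k => if k = k0 then 1 else 0) = X k0 := by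
  rw [Lf]
  rw [Finset.sum_eq_single k0]
  · simp
  · intro k _ hk
    simp [hk]
  · simp

lemma Lf_injective (n : ℕ) : Function.Injective (Lf n) := by
  intro a b hab
  have h0 : Lf n (a - b) = 0 := by rw [Lf_sub, hab, sub_self]
  exact sub_eq_zero.mp (Lf_eq_zero n _ h0)

lemma dvd_Lf (n : ℕ) (v w : Fin n → ℝ) (hv : v ≠ 0) (hw : w ≠ 0)
    (hdvd : Lf n w ∣ Lf n v) : ∃ b : ℝ, b ≠ 0 ∧ v = b • w := by
  obtain ⟨k0, hk0⟩ : ∃ k, w k ≠ 0 := by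
    by_contra h; push_neg at h; exact hw (funext h)
  set ψ := psi n w k0 hk0 with hψ
  -- the image of Lf v under ψ.symm is a linear form
  set e0 : Fin n → ℝ := fun k => if k = k0 then 1 else 0 with he0
  set v' : Fin n → ℝ := v + (v k0) • ((w k0)⁻¹ • (e0 - (w - (w k0) • e0)) - e0) with hv'def
  have hsymm : ψ.symm (Lf n v) = Lf n v' := by
    have h1 : ψ.symm (Lf n v) = aeval (fun k => if k = k0 then
        C (w k0)⁻¹ * (X k0 - (Lf n w - C (w k0) * X k0)) else X k) (Lf n v) := rfl
    rw [h1, aeval_Lf, sum_C_mul_ite]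
    rw [hv'def, Lf_add, Lf_smul, Lf_sub, Lf_smul, Lf_sub, Lf_sub, Lf_smul, Lf_single]
  have hLv : Lf n v ≠ 0 := fun h => hv (Lf_eq_zero n v h)
  have hv'ne : Lf n v' ≠ 0 := by
    rw [← hsymm]
    simpa using hLv
  have hXdvd : X k0 ∣ Lf n v' := by
    have : ψ.symm (Lf n w) = X k0 := by
      rw [← psi_X n w k0 hk0]
      exact ψ.symm_apply_apply _
    rw [← this, ← hsymm]
    exact (map_dvd (ψ.symm : MvPolynomial (Fin n) ℝ →+* MvPolynomial (Fin n) ℝ) hdvd)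
  obtain ⟨q, hq⟩ := hXdvd
  have hzero : ∀ k, k ≠ k0 → v' k = 0 := by
    intro k hk
    have := coeff_Lf n v' k
    rw [hq, coeff_X_mul'] at this
    rw [← this]
    have : k0 ∉ (Finsupp.single k (1:ℕ)).support := by
      simp [Finsupp.support_single_ne_zero k one_ne_zero, (Ne.symm hk)]
    simp [this, Ne.symm hk]
  have hLv' : Lf n v' = C (v' k0) * X k0 := by
    rw [Lf, Finset.sum_eq_single k0]
    · intro k _ hk
      rw [hzero k hk]; simp
    · simp
  have hb : Lf n v = C (v' k0) * Lf n w := by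
    have := congrArg ψ hsymm
    rw [ψ.apply_symm_apply, hLv'] at this
    rw [this, map_mul]
    congr 1
    · rw [← algebraMap_eq]
      exact ψ.commutes _
    · exact psi_X n w k0 hk0
  have hveq : v = (v' k0) • w := by
    apply Lf_injective n
    rw [hb, ← Lf_smul]
  refine ⟨v' k0, ?_, hveq⟩
  intro h0
  rw [h0, zero_smul] at hveq
  exact hv hveq

lemma key_lemma (n : ℕ) : ∀ d (x y : Fin d → Fin n → ℝ), (∀ j, x j ≠ 0) → (∀ j, y j ≠ 0) →
    ∀ a : ℝ, a ≠ 0 → C a * ∏ j, Lf n (x j) = ∏ j, Lf n (y j) →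
    ∃ σ : Equiv.Perm (Fin d), ∃ c : Fin d → ℝ, ∀ j, y j = c j • x (σ j) := by
  intro d
  induction d with
  | zero => exact fun x y _ _ a _ _ => ⟨1, 1, fun j => j.elim0⟩
  | succ d ih =>
    intro x y hx hy a ha heq
    have hprime : Prime (Lf n (y (Fin.last d))) := prime_Lf n _ (hy _)
    have hdvd : Lf n (y (Fin.last d)) ∣ C a * ∏ j, Lf n (x j) := by
      rw [heq]; exact Finset.dvd_prod_of_mem _ (Finset.mem_univ _)
    have hdvd2 : Lf n (y (Fin.last d)) ∣ ∏ j, Lf n (x j) := by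
      rcases hprime.dvd_mul.mp hdvd with h | h
      · exact absurd (isUnit_of_dvd_unit h ((isUnit_iff_ne_zero.mpr ha).map (C : ℝ →+* MvPolynomial (Fin n) ℝ)))
          hprime.not_unit
      · exact h
    obtain ⟨j0, -, hj0⟩ := hprime.exists_mem_finset_dvd hdvd2
    obtain ⟨b, hb, hxj0⟩ := dvd_Lf n (x j0) (y (Fin.last d)) (hx j0) (hy _) hj0
    set sw : Equiv.Perm (Fin (d+1)) := Equiv.swap j0 (Fin.last d) with hsw
    have hx'prod : ∏ j, Lf n (x (sw j)) = ∏ j, Lf n (x j) :=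
      Equiv.prod_comp sw (fun j => Lf n (x j))
    have hswlast : sw (Fin.last d) = j0 := Equiv.swap_apply_right _ _
    have heq2 : C (a * b) * ∏ j : Fin d, Lf n (x (sw j.castSucc))
        = ∏ j : Fin d, Lf n (y j.castSucc) := by
      have hyne : Lf n (y (Fin.last d)) ≠ 0 := hprime.ne_zero
      apply mul_right_cancel₀ hyne
      calc C (a * b) * (∏ j : Fin d, Lf n (x (sw j.castSucc))) * Lf n (y (Fin.last d))
          = C a * ((∏ j : Fin d, Lf n (x (sw j.castSucc))) * (C b * Lf n (y (Fin.last d)))) := by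
            rw [C_mul]; ring
        _ = C a * ((∏ j : Fin d, Lf n (x (sw j.castSucc))) * Lf n (x (sw (Fin.last d)))) := by
            rw [hswlast, hxj0, Lf_smul]
        _ = C a * ∏ j, Lf n (x (sw j)) := by rw [Fin.prod_univ_castSucc]
        _ = ∏ j, Lf n (y j) := by rw [hx'prod, heq]
        _ = (∏ j : Fin d, Lf n (y j.castSucc)) * Lf n (y (Fin.last d)) := by
            rw [Fin.prod_univ_castSucc]
    obtain ⟨σ', c', hσ'⟩ := ih (fun j => x (sw j.castSucc)) (fun j => y j.castSucc)
      (fun j => hx _) (fun j => hy _) (a * b) (mul_ne_zero ha hb) heq2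
    set ext : Equiv.Perm (Fin (d+1)) :=
      (finSuccEquivLast.symm).permCongr (Equiv.optionCongr σ') with hext
    have hext_cast : ∀ j : Fin d, ext j.castSucc = (σ' j).castSucc := by
      intro j
      simp [hext, Equiv.permCongr_apply]
    have hext_last : ext (Fin.last d) = Fin.last d := by
      simp [hext, Equiv.permCongr_apply]
    refine ⟨ext.trans sw, Fin.lastCases b⁻¹ c', ?_⟩
    intro j
    induction j using Fin.lastCases with
    | last =>
      have : (ext.trans sw) (Fin.last d) = j0 := by
        simp [Equiv.trans_apply, hext_last, hswlast]
      rw [this]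
      simp only [Fin.lastCases_last]
      rw [hxj0, smul_smul, inv_mul_cancel₀ hb, one_smul]
    | cast j =>
      have : (ext.trans sw) j.castSucc = sw ((σ' j).castSucc) := by
        simp [Equiv.trans_apply, hext_cast]
      rw [this]
      simp only [Fin.lastCases_castSucc]
      exact hσ' j

/-- If two tuples of vectors `x, y : Fin d → ℝⁿ` satisfy
`∏ⱼ ⟨u, xⱼ⟩ = ∏ⱼ ⟨u, yⱼ⟩` for every `u ∈ ℝⁿ`, then `⊗ⱼ yⱼ = ⊗ⱼ x_{σ(j)}` for
some permutation `σ` of `Fin d`. -/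
theorem rank_one_tensor_eq_up_to_permutation
    (d n : ℕ) (hd : 1 ≤ d) (hn : 1 ≤ n)
    (x y : Fin d → (Fin n → ℝ))
    (h : ∀ u : Fin n → ℝ,
      ∏ j, (∑ k, u k * x j k) = ∏ j, (∑ k, u k * y j k)) :
    ∃ σ : Equiv.Perm (Fin d), ∀ idx : Fin d → Fin n,
      ∏ j, y j (idx j) = ∏ j, x (σ j) (idx j) := by
  have hpoly : ∏ j, Lf n (x j) = ∏ j, Lf n (y j) := by
    apply MvPolynomial.funext
    intro u
    rw [map_prod, map_prod]
    simp_rw [eval_Lf]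
    exact h u
  by_cases hx0 : ∀ j, x j ≠ 0
  · -- nondegenerate case
    have hxprod : ∏ j, Lf n (x j) ≠ 0 :=
      Finset.prod_ne_zero_iff.mpr fun j _ => fun hz => hx0 j (Lf_eq_zero n _ hz)
    have hy0 : ∀ j, y j ≠ 0 := by
      intro j hj
      apply hxprod
      rw [hpoly]
      refine Finset.prod_eq_zero (Finset.mem_univ j) ?_
      rw [hj]
      simp [Lf]
    obtain ⟨σ, c, hc⟩ := key_lemma n d x y hx0 hy0 1 one_ne_zero (by rw [map_one, one_mul, hpoly])
    -- show ∏ c = 1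
    have hyprod : ∏ j, Lf n (y j) ≠ 0 :=
      Finset.prod_ne_zero_iff.mpr fun j _ => fun hz => hy0 j (Lf_eq_zero n _ hz)
    have hCprod : C (∏ j, c j) * ∏ j, Lf n (y j) = ∏ j, Lf n (y j) := by
      conv_rhs => rw [show (∏ j, Lf n (y j)) = ∏ j, Lf n (c j • x (σ j)) by
        exact Finset.prod_congr rfl fun j _ => by rw [hc j]]
      simp_rw [Lf_smul]
      rw [Finset.prod_mul_distrib, ← map_prod (C : ℝ →+* MvPolynomial (Fin n) ℝ)]
      congr 1
      rw [Equiv.prod_comp σ (fun j => Lf n (x j)), hpoly]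
    have hcprod : ∏ j, c j = 1 := by
      have h1 : C (∏ j, c j) = 1 := mul_right_cancel₀ hyprod (by rw [hCprod, one_mul])
      have := congrArg (eval (0 : Fin n → ℝ)) h1
      simpa using this
    refine ⟨σ, fun idx => ?_⟩
    calc ∏ j, y j (idx j) = ∏ j, (c j * x (σ j) (idx j)) := by
          refine Finset.prod_congr rfl fun j _ => ?_
          rw [hc j]; rfl
      _ = (∏ j, c j) * ∏ j, x (σ j) (idx j) := Finset.prod_mul_distrib
      _ = ∏ j, x (σ j) (idx j) := by rw [hcprod, one_mul]
  · -- degenerate case: some x j = 0, hence some y j = 0, both tensors vanish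
    push_neg at hx0
    obtain ⟨j0, hj0⟩ := hx0
    have hxprod : ∏ j, Lf n (x j) = 0 := by
      refine Finset.prod_eq_zero (Finset.mem_univ j0) ?_
      rw [hj0]; simp [Lf]
    have : ∃ j1, Lf n (y j1) = 0 := by
      have : ∏ j, Lf n (y j) = 0 := by rw [← hpoly, hxprod]
      obtain ⟨j1, -, hj1⟩ := Finset.prod_eq_zero_iff.mp this
      exact ⟨j1, hj1⟩
    obtain ⟨j1, hj1⟩ := this
    have hy1 : y j1 = 0 := Lf_eq_zero n _ hj1
    refine ⟨1, fun idx => ?_⟩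
    rw [Finset.prod_eq_zero (Finset.mem_univ j1) (by rw [hy1]; rfl),
      Finset.prod_eq_zero (Finset.mem_univ j0) (by simp [hj0])]
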